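/- Let |w⟩ and |w̃⟩ be unit vectors in ℂ^N with real nonnegative inner product ⟨w|w̃⟩ = cos θ. Define the reflections U_w = 1 - 2|w⟩⟨w| and U_{w̃} = 1 - 2|w̃⟩⟨w̃|. Then the operator norm satisfies ‖U_w - U_{w̃}‖ = 2|sin θ|. -/

import Mathlib

open scoped InnerProductSpace

/-- Reflection about the hyperplane orthogonal to `v`: `1 - 2|v⟩⟨v|`. -/
noncomputable def reflOp {N : ℕ} (v : EuclideanSpace ℂ (Fin N)) :
    EuclideanSpace ℂ (Fin N) →L[ℂ] EuclideanSpace ℂ (Fin N) :=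
  ContinuousLinearMap.id ℂ (EuclideanSpace ℂ (Fin N)) -
    (2 : ℂ) • ((innerSL ℂ v).smulRight v)


lemma pyth {N : ℕ} (w u : EuclideanSpace ℂ (Fin N)) (hw : ‖w‖ = 1) (hu : ‖u‖ = 1)
    (hwu : ⟪w, u⟫_ℂ = 0) (p q : ℂ) : ‖p • w + q • u‖ ^ 2 = ‖p‖ ^ 2 + ‖q‖ ^ 2 := by
  rw [sq, norm_add_sq_eq_norm_sq_add_norm_sq_of_inner_eq_zero (𝕜 := ℂ) _ _
    (by rw [inner_smul_left, inner_smul_right, hwu]; ring)]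
  simp [norm_smul, hw, hu]; ring

lemma bessel2 {N : ℕ} (w u x : EuclideanSpace ℂ (Fin N)) (hw : ‖w‖ = 1) (hu : ‖u‖ = 1)
    (hwu : ⟪w, u⟫_ℂ = 0) :
    ‖⟪w, x⟫_ℂ‖ ^ 2 + ‖⟪u, x⟫_ℂ‖ ^ 2 ≤ ‖x‖ ^ 2 := by
  set a := ⟪w, x⟫_ℂ with ha
  set b := ⟪u, x⟫_ℂ with hb
  have huw : ⟪u, w⟫_ℂ = 0 := by rw [← inner_conj_symm, hwu, map_zero]
  have hww : ⟪w, w⟫_ℂ = 1 := by rw [inner_self_eq_norm_sq_to_K, hw]; norm_num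
  have huu : ⟪u, u⟫_ℂ = 1 := by rw [inner_self_eq_norm_sq_to_K, hu]; norm_num
  have hx : x = (a • w + b • u) + (x - a • w - b • u) := by abel
  have horth : ⟪a • w + b • u, x - a • w - b • u⟫_ℂ = 0 := by
    simp only [inner_add_left, inner_sub_right, inner_smul_left, inner_smul_right,
      hwu, huw, hww, huu, ← ha, ← hb]
    ring
  have h1 := norm_add_sq_eq_norm_sq_add_norm_sq_of_inner_eq_zero (𝕜 := ℂ) _ _ horth
  rw [← hx] at h1
  have h2 := pyth w u hw hu hwu a b
  nlinarith [norm_nonneg (x - a • w - b • u), norm_nonneg x]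

lemma cplxid (a b : ℂ) (c s : ℝ) (h : c ^ 2 + s ^ 2 = 1) :
    ‖(c:ℂ) * b - (s:ℂ) * a‖ ^ 2 + ‖(c:ℂ) * a + (s:ℂ) * b‖ ^ 2 = ‖a‖ ^ 2 + ‖b‖ ^ 2 := by
  simp only [Complex.sq_norm, Complex.normSq_apply, Complex.sub_re,
    Complex.sub_im, Complex.add_re, Complex.add_im, Complex.mul_re, Complex.mul_im,
    Complex.ofReal_re, Complex.ofReal_im]
  nlinarith [sq_nonneg a.re, sq_nonneg a.im]

set_option maxHeartbeats 1000000

/-- for unit vectors `w, w̃` in ℂ^N with real nonnegative inner product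
`⟨w|w̃⟩ = cos θ` (θ ∈ [0, π/2]), the operator norm of the difference of the two
reflections is `2|sin θ|`. -/
theorem stmt1 (N : ℕ) (w wt : EuclideanSpace ℂ (Fin N))
    (hw : ‖w‖ = 1) (hwt : ‖wt‖ = 1) (θ : ℝ)
    (hθ0 : 0 ≤ θ) (hθ1 : θ ≤ Real.pi / 2)
    (hinner : ⟪w, wt⟫_ℂ = (Real.cos θ : ℝ)) :
    ‖reflOp w - reflOp wt‖ = 2 * |Real.sin θ| := by
  have hpi := Real.pi_pos
  set c := Real.cos θ with hc
  set s := Real.sin θ with hsdef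
  have hs0 : 0 ≤ s := Real.sin_nonneg_of_nonneg_of_le_pi hθ0 (by linarith)
  have hcs : c ^ 2 + s ^ 2 = 1 := by
    rw [hc, hsdef, add_comm]; exact Real.sin_sq_add_cos_sq θ
  have habs : |s| = s := abs_of_nonneg hs0
  rcases eq_or_lt_of_le hs0 with hs | hs
  · -- s = 0, so θ = 0 and w = wt
    have hθ : θ = 0 := by
      have := (Real.sin_eq_zero_iff_of_lt_of_lt (by linarith) (by linarith)).mp hs.symm
      exact this
    have hc1 : ⟪w, wt⟫_ℂ = 1 := by
      rw [hinner, hc, hθ]; norm_num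
    have hweq : w = wt := (inner_eq_one_iff_of_norm_eq_one hw hwt).mp hc1
    rw [hweq, sub_self, norm_zero, habs, ← hs]
    norm_num
  · -- s > 0
    have hsne : (s : ℂ) ≠ 0 := by exact_mod_cast hs.ne'
    have hww : ⟪w, w⟫_ℂ = 1 := by rw [inner_self_eq_norm_sq_to_K, hw]; norm_num
    obtain ⟨u, hu_def⟩ : ∃ u : EuclideanSpace ℂ (Fin N),
        u = (s⁻¹ : ℂ) • (wt - (c : ℂ) • w) := ⟨_, rfl⟩
    have hwu : ⟪w, u⟫_ℂ = 0 := by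
      rw [hu_def, inner_smul_right, inner_sub_right, inner_smul_right, hinner, hww]
      ring
    have huw : ⟪u, w⟫_ℂ = 0 := by rw [← inner_conj_symm, hwu, map_zero]
    have hnd : ‖wt - (c : ℂ) • w‖ = s := by
      have hsq : ‖wt - (c : ℂ) • w‖ ^ 2 = s ^ 2 := by
        have hinner2 : ⟪wt, w⟫_ℂ = (c : ℂ) := by
          rw [← inner_conj_symm, hinner, Complex.conj_ofReal]
        rw [norm_sub_sq (𝕜 := ℂ), inner_smul_right, hinner2, hwt, norm_smul,
          Complex.norm_real, Real.norm_eq_abs, hw]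
        simp only [RCLike.mul_re, RCLike.re_to_complex, RCLike.im_to_complex,
          Complex.ofReal_re, Complex.ofReal_im]
        nlinarith [abs_nonneg c, sq_abs c]
      nlinarith [norm_nonneg (wt - (c : ℂ) • w)]
    have hu : ‖u‖ = 1 := by
      rw [hu_def, norm_smul, norm_inv, Complex.norm_real, Real.norm_eq_abs, habs, hnd,
        inv_mul_cancel₀ hs.ne']
    have hwt_eq : wt = (c : ℂ) • w + (s : ℂ) • u := by
      rw [hu_def, smul_smul, mul_inv_cancel₀ hsne, one_smul]; abel
    have hcsC : (c : ℂ) ^ 2 + (s : ℂ) ^ 2 = 1 := by exact_mod_cast hcs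
    -- key norm computation
    have key : ∀ x : EuclideanSpace ℂ (Fin N),
        ‖⟪wt, x⟫_ℂ • wt - ⟪w, x⟫_ℂ • w‖ ^ 2
          = s ^ 2 * (‖⟪w, x⟫_ℂ‖ ^ 2 + ‖⟪u, x⟫_ℂ‖ ^ 2) := by
      intro x
      set a := ⟪w, x⟫_ℂ with ha
      set b := ⟪u, x⟫_ℂ with hb
      have hwtx : ⟪wt, x⟫_ℂ = (c : ℂ) * a + (s : ℂ) * b := by
        rw [hwt_eq, inner_add_left, inner_smul_left, inner_smul_left,
          Complex.conj_ofReal, Complex.conj_ofReal, ← ha, ← hb]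
      have hvec : ⟪wt, x⟫_ℂ • wt - a • w
          = ((s : ℂ) * ((c : ℂ) * b - (s : ℂ) * a)) • w
            + ((s : ℂ) * ((c : ℂ) * a + (s : ℂ) * b)) • u := by
        rw [hwtx, hwt_eq]
        match_scalars
        · linear_combination a * hcsC
        · ring
      rw [hvec, pyth w u hw hu hwu]
      have h1 : ‖(s : ℂ) * ((c : ℂ) * b - (s : ℂ) * a)‖ = s * ‖(c : ℂ) * b - (s : ℂ) * a‖ := by
        rw [norm_mul, Complex.norm_real, Real.norm_eq_abs, habs]
      have h2 : ‖(s : ℂ) * ((c : ℂ) * a + (s : ℂ) * b)‖ = s * ‖(c : ℂ) * a + (s : ℂ) * b‖ := by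
        rw [norm_mul, Complex.norm_real, Real.norm_eq_abs, habs]
      rw [h1, h2, mul_pow, mul_pow, ← mul_add, ← cplxid a b c s hcs]
    have hT : ∀ x : EuclideanSpace ℂ (Fin N),
        (reflOp w - reflOp wt) x = (2 : ℂ) • (⟪wt, x⟫_ℂ • wt - ⟪w, x⟫_ℂ • w) := by
      intro x
      simp only [reflOp, ContinuousLinearMap.sub_apply, ContinuousLinearMap.smul_apply,
        ContinuousLinearMap.smulRight_apply, ContinuousLinearMap.id_apply, innerSL_apply_apply]
      module
    rw [habs]
    apply le_antisymm
    · apply ContinuousLinearMap.opNorm_le_bound _ (by positivity)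
      intro x
      rw [hT x, norm_smul]
      have hb2 := bessel2 w u x hw hu hwu
      have hk := key x
      have hle : ‖⟪wt, x⟫_ℂ • wt - ⟪w, x⟫_ℂ • w‖ ≤ s * ‖x‖ := by
        nlinarith [norm_nonneg (⟪wt, x⟫_ℂ • wt - ⟪w, x⟫_ℂ • w), norm_nonneg x,
          mul_nonneg (le_of_lt hs) (norm_nonneg x)]
      calc ‖(2:ℂ)‖ * ‖⟪wt, x⟫_ℂ • wt - ⟪w, x⟫_ℂ • w‖ ≤ 2 * (s * ‖x‖) := by
            rw [show ‖(2:ℂ)‖ = 2 by norm_num]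
            nlinarith
        _ = 2 * s * ‖x‖ := by ring
    · have hle := ContinuousLinearMap.le_opNorm (reflOp w - reflOp wt) w
      rw [hw, mul_one, hT w] at hle
      have hk := key w
      rw [hww, huw] at hk
      have : ‖⟪wt, w⟫_ℂ • wt - (1 : ℂ) • w‖ = s := by
        have h2 : ‖⟪wt, w⟫_ℂ • wt - (1 : ℂ) • w‖ ^ 2 = s ^ 2 := by
          rw [hk]; norm_num
        nlinarith [norm_nonneg (⟪wt, w⟫_ℂ • wt - (1 : ℂ) • w)]
      rw [norm_smul, hww] at hle
      rw [this] at hle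
      calc 2 * s = ‖(2:ℂ)‖ * s := by norm_num
        _ ≤ _ := hle
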